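/- Let (P,≤) be a poset and A ⊆ P a finite downset enumerated as a_1,…,a_k so that a_j is not strictly below a_i whenever i < j. Then the cut C_A equals the composition of singleton cuts C_{a_k} ∘ ⋯ ∘ C_{a_1}, where at each stage {a_i} is a one-element downset of the poset C_{a_{i-1}}⋯C_{a_1}(P,≤). -/

import Mathlib

universe u

variable {P : Type u}

/-- `A` is a downset (downward closed set) w.r.t. the relation `le`. -/
def IsDownset (le : P → P → Prop) (A : Set P) : Prop :=
  ∀ ⦃x⦄, x ∈ A → ∀ ⦃y⦄, le y x → y ∈ A

/-- `C` is an upset (upward closed set) w.r.t. the relation `le`. -/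
def IsUpset (le : P → P → Prop) (C : Set P) : Prop :=
  ∀ ⦃x⦄, x ∈ C → ∀ ⦃y⦄, le x y → y ∈ C

/-- `x` and `y` are incomparable w.r.t. `le`. -/
def Incomp (le : P → P → Prop) (x y : P) : Prop := ¬ le x y ∧ ¬ le y x

/-- Strictly less: `le x y` and `x ≠ y`. -/
def SLT (le : P → P → Prop) (x y : P) : Prop := le x y ∧ x ≠ y

/-- The conditions under which the rotation `R_{A,C}` is defined:
`A`, `C` disjoint, `A` a downset, `C` an upset, and every element of `A`
strictly below every element of `C`. -/
def RotOK (le : P → P → Prop) (A C : Set P) : Prop :=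
  Disjoint A C ∧ IsDownset le A ∧ IsUpset le C ∧
    ∀ a ∈ A, ∀ c ∈ C, le a c ∧ a ≠ c

/-- The rotation `R_{A,C}` of the relation `le`; the middle block `B` is the
complement of `A ∪ C`. -/
def Rot (le : P → P → Prop) (A C : Set P) : P → P → Prop := fun x y =>
  (((x ∈ A ∧ y ∈ A) ∨ (x ∉ A ∧ x ∉ C ∧ y ∉ A ∧ y ∉ C) ∨ (x ∈ C ∧ y ∈ C)) ∧ le x y) ∨
  (x ∉ A ∧ x ∉ C ∧ y ∈ A ∧ Incomp le x y) ∨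
  (x ∈ C ∧ y ∈ A) ∨
  (x ∈ C ∧ y ∉ A ∧ y ∉ C ∧ Incomp le x y)

/-- One rotation step between two relations on the same domain. -/
def RotStep (le le' : P → P → Prop) : Prop :=
  ∃ A C, RotOK le A C ∧ le' = Rot le A C

/-- Rotation-equivalence: the reflexive-transitive closure of rotation steps. -/
def RotEquiv (le le' : P → P → Prop) : Prop :=
  Relation.ReflTransGen RotStep le le'

/-- Restriction of a relation to a subset (as a relation on the subtype). -/
def restrictRel (le : P → P → Prop) (S : Set P) : S → S → Prop :=
  fun x y => le x.1 y.1

/-- The set of maximal elements of a relation. -/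
def maxSet (le : P → P → Prop) : Set P := {x | ∀ y, le x y → y = x}

/-- The rotation class `O₂` of a three element poset `{a,b,c}`:
chains `a<b<c`, `b<c<a`, `c<a<b`, and the posets with single comparability
`a<b`, `b<c`, `c<a`. -/
def O2rel (le : P → P → Prop) (a b c : P) : Prop :=
  (SLT le a b ∧ SLT le b c) ∨ (SLT le b c ∧ SLT le c a) ∨ (SLT le c a ∧ SLT le a b) ∨
  (SLT le a b ∧ Incomp le a c ∧ Incomp le b c) ∨
  (SLT le b c ∧ Incomp le b a ∧ Incomp le c a) ∨
  (SLT le c a ∧ Incomp le c b ∧ Incomp le a b)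

/-- The rotation class `O₃`: the dual of `O₂`. -/
def O3rel (le : P → P → Prop) (a b c : P) : Prop := O2rel le c b a

/-- The rotation class `O₁`: the antichain together with the `V` and `Λ` shaped
three element posets. -/
def O1rel (le : P → P → Prop) (a b c : P) : Prop :=
  (Incomp le a b ∧ Incomp le b c ∧ Incomp le a c) ∨
  (SLT le a b ∧ SLT le a c ∧ Incomp le b c) ∨
  (SLT le b a ∧ SLT le b c ∧ Incomp le a c) ∨
  (SLT le c a ∧ SLT le c b ∧ Incomp le a b) ∨
  (SLT le b a ∧ SLT le c a ∧ Incomp le b c) ∨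
  (SLT le a b ∧ SLT le c b ∧ Incomp le a c) ∨
  (SLT le a c ∧ SLT le b c ∧ Incomp le a b)

/-- The extension property (EXT) characterizing the random poset: every
one-point extension of a finite subposet is realized by some element. -/
def ExtProp (le : P → P → Prop) : Prop :=
  ∀ Q : Set P, Q.Finite → ∀ D U : Set P, D ⊆ Q → U ⊆ Q → Disjoint D U →
    (∀ x ∈ Q, ∀ d ∈ D, le x d → x ∈ D) →
    (∀ x ∈ Q, ∀ u ∈ U, le u x → x ∈ U) →
    (∀ d ∈ D, ∀ u ∈ U, le d u ∧ d ≠ u) →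
    ∃ s, s ∉ Q ∧ (∀ d ∈ D, le d s ∧ d ≠ s) ∧ (∀ u ∈ U, le s u ∧ s ≠ u) ∧
      ∀ x ∈ Q, x ∉ D → x ∉ U → Incomp le s x


lemma rot_cut (le : P → P → Prop) (A : Set P) (x y : P) :
    Rot le A ∅ x y ↔ (x ∈ A ∧ y ∈ A ∧ le x y) ∨ (x ∉ A ∧ y ∉ A ∧ le x y) ∨
      (x ∉ A ∧ y ∈ A ∧ Incomp le x y) := by
  simp only [Rot, Set.mem_empty_iff_false]
  tauto

lemma rot_empty (le : P → P → Prop) : Rot le (∅ : Set P) ∅ = le := by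
  funext x y
  simp [rot_cut]

set_option maxHeartbeats 2000000 in
lemma rot_insert (le : P → P → Prop) (hrefl : ∀ x, le x x) (A : Set P)
    (hA : IsDownset le A) (b : P) (hb : b ∉ A) :
    Rot (Rot le A ∅) {b} ∅ = Rot le (insert b A) ∅ := by
  funext x y
  have hbb : le b b := hrefl b
  have hbx : x ∈ A → ¬ le b x := fun hx h => hb (hA hx h)
  have hby : y ∈ A → ¬ le b y := fun hy h => hb (hA hy h)
  have hxy : y ∈ A → le x y → x ∈ A := fun hy h => hA hy h
  have hyx : x ∈ A → le y x → y ∈ A := fun hx h => hA hx h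
  rw [eq_iff_iff]
  simp only [rot_cut, Set.mem_singleton_iff, Set.mem_insert_iff, Incomp]
  by_cases hx : x ∈ A <;> by_cases hy : y ∈ A <;>
    by_cases hxb : x = b <;> by_cases hyb : y = b <;> subst_vars <;>
      simp_all

section
variable (le : P → P → Prop) [IsPartialOrder P le]
variable {k : ℕ} (a : Fin k → P)

def Apre (n : ℕ) : Set P := {p | ∃ j : Fin k, j.val < n ∧ a j = p}

lemma range_eq_Apre : Set.range a = Apre a k := by
  ext p
  constructor
  · rintro ⟨j, rfl⟩; exact ⟨j, j.isLt, rfl⟩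
  · rintro ⟨j, _, rfl⟩; exact ⟨j, rfl⟩

variable (ha : Function.Injective a) (hA : IsDownset le (Set.range a))
  (horder : ∀ i j : Fin k, i < j → ¬ SLT le (a j) (a i))

include ha hA horder in
lemma Apre_downset (n : ℕ) : IsDownset le (Apre a n) := by
  rintro x ⟨j, hjn, rfl⟩ y hle
  obtain ⟨m, rfl⟩ := hA ⟨j, rfl⟩ hle
  refine ⟨m, ?_, rfl⟩
  by_contra hm
  push_neg at hm
  have hjm : j < m := by omega
  exact horder j m hjm ⟨hle, fun h => absurd (ha h) (by omega)⟩

include ha in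
lemma notmem_Apre (i : Fin k) : a i ∉ Apre a i.val := by
  rintro ⟨j, hj, hji⟩
  have := ha hji
  omega

include ha hA horder in
lemma fold_eq (n : ℕ) (hn : n ≤ k) :
    ((List.ofFn a).take n).foldl (fun r x => Rot r {x} ∅) le = Rot le (Apre a n) ∅ := by
  induction n with
  | zero =>
    have : Apre a 0 = (∅ : Set P) := by
      ext p; simp [Apre]
    simp [this, rot_empty]
  | succ n ih =>
    have hnk : n < k := hn
    have htake : (List.ofFn a).take (n + 1) = (List.ofFn a).take n ++ [a ⟨n, hnk⟩] := by
      rw [List.take_succ]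
      simp [List.getElem?_ofFn, hnk]
    have hins : insert (a ⟨n, hnk⟩) (Apre a n) = Apre a (n + 1) := by
      ext p
      simp only [Set.mem_insert_iff, Apre, Set.mem_setOf_eq]
      constructor
      · rintro (rfl | ⟨j, hj, rfl⟩)
        · exact ⟨⟨n, hnk⟩, Nat.lt_succ_self n, rfl⟩
        · exact ⟨j, by omega, rfl⟩
      · rintro ⟨j, hj, rfl⟩
        rcases Nat.lt_succ_iff_lt_or_eq.mp hj with h | h
        · exact Or.inr ⟨j, h, rfl⟩
        · left; congr; exact Fin.ext h
    rw [htake, List.foldl_append, ih (le_of_lt hnk)]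
    simp only [List.foldl_cons, List.foldl_nil]
    rw [rot_insert le (fun x => refl_of le x) _
      (Apre_downset le a ha hA horder n) _ (notmem_Apre a ha ⟨n, hnk⟩), hins]

end


theorem stmt5 (le : P → P → Prop) [IsPartialOrder P le]
    (k : ℕ) (a : Fin k → P) (ha : Function.Injective a)
    (A : Set P) (hAa : A = Set.range a) (hA : IsDownset le A)
    (horder : ∀ i j : Fin k, i < j → ¬ SLT le (a j) (a i)) :
    (∀ i : Fin k,
      IsDownset (((List.ofFn a).take i).foldl (fun r x => Rot r {x} ∅) le) {a i}) ∧
    Rot le A ∅ = (List.ofFn a).foldl (fun r x => Rot r {x} ∅) le := by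
  subst hAa
  constructor
  · intro i
    rw [fold_eq le a ha hA horder i.val (le_of_lt i.isLt)]
    rintro x rfl y hle
    rw [rot_cut] at hle
    have hnm := notmem_Apre a ha i
    rcases hle with ⟨_, hx, _⟩ | ⟨hyn, _, hle⟩ | ⟨_, hx, _⟩
    · exact absurd hx hnm
    · obtain ⟨m, rfl⟩ := hA ⟨i, rfl⟩ hle
      by_cases him : i = m
      · rw [him]; rfl
      · exfalso
        have hmi : ¬ (m : ℕ) < (i : ℕ) := fun h => hyn ⟨m, h, rfl⟩
        have : i < m := by
          rcases lt_or_gt_of_ne (fun h : m = i => him h.symm) with h | h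
          · exact absurd (Fin.lt_def.mp h) hmi
          · exact h
        exact horder i m this ⟨hle, fun h => him (ha h.symm)⟩
    · exact absurd hx hnm
  · have : (List.ofFn a) = (List.ofFn a).take k := by simp
    rw [this, fold_eq le a ha hA horder k le_rfl, range_eq_Apre]
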